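/- Let A be a standard graded k-algebra with Hilbert function H(i) = dim_k A_i. If H(i) ≤ i for some i ≥ 1, then H(i) ≥ H(i+1) ≥ H(i+2) ≥ ⋯, i.e. the Hilbert function is nonincreasing from degree i onward. -/

import Mathlib

open Finset

/-- Arithmetic core of the easy range of Macaulay's bound. -/
lemma club : ∀ (t m : ℕ) (l : ℕ → ℕ) (c₀ : ℕ), m ≤ c₀ + t →
    min (∑ c ∈ Icc c₀ m, l c) (m - c₀) ≤
      ∑ c ∈ Icc c₀ m, max (min (l c) (m - c)) (l (c + 1)) := by
  intro t
  induction t with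
  | zero =>
    intro m l c₀ h
    simp only [Nat.add_zero] at h
    have : m - c₀ = 0 := Nat.sub_eq_zero_of_le h
    simp [this]
  | succ t ih =>
    intro m l c₀ h
    rcases le_or_gt m c₀ with hc | hc
    · have : m - c₀ = 0 := Nat.sub_eq_zero_of_le hc
      simp [this]
    -- c₀ < m
    have hicc : Icc c₀ m = insert c₀ (Icc (c₀+1) m) := by
      ext x; simp only [Finset.mem_Icc, Finset.mem_insert]; omega
    have hnotmem : c₀ ∉ Icc (c₀+1) m := by simp
    set T' := ∑ c ∈ Icc (c₀+1) m, l c with hT'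
    rcases le_or_gt (m - c₀) T' with h1 | h2
    · -- case 1 : plenty of mass above; use the shift bound
      have hshift : T' ≤ ∑ c ∈ Icc c₀ m, l (c+1) := by
        have : ∑ c ∈ Icc c₀ m, l (c+1) = ∑ c ∈ Icc (c₀+1) (m+1), l c := by
          apply Finset.sum_nbij' (fun c => c + 1) (fun c => c - 1) <;>
            intros <;> first
              | rfl
              | (simp only [Finset.mem_Icc] at *; omega)
        rw [this]
        apply Finset.sum_le_sum_of_subset
        apply Finset.Icc_subset_Icc_right; omega
      calc min (∑ c ∈ Icc c₀ m, l c) (m - c₀) ≤ m - c₀ := min_le_right _ _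
        _ ≤ T' := h1
        _ ≤ ∑ c ∈ Icc c₀ m, l (c+1) := hshift
        _ ≤ _ := Finset.sum_le_sum (fun c _ => le_max_right _ _)
    · -- case 2 : T' < m - c₀, use IH
      have hT'le : T' ≤ m - (c₀+1) := by omega
      have := ih m l (c₀+1) (by omega)
      rw [min_eq_left hT'le] at this
      rw [hicc, Finset.sum_insert hnotmem, Finset.sum_insert hnotmem]
      rcases le_or_gt (l c₀) (m - c₀) with hl | hl
      · calc min (l c₀ + T') (m - c₀) ≤ l c₀ + T' := min_le_left _ _
          _ ≤ max (min (l c₀) (m - c₀)) (l (c₀+1)) + ∑ c ∈ Icc (c₀+1) m, max (min (l c) (m-c)) (l (c+1)) := by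
              apply Nat.add_le_add _ this
              rw [min_eq_left hl]; exact le_max_left _ _
      · calc min (l c₀ + T') (m - c₀) ≤ m - c₀ := min_le_right _ _
          _ ≤ max (min (l c₀) (m - c₀)) (l (c₀+1)) + ∑ c ∈ Icc (c₀+1) m, max (min (l c) (m-c)) (l (c+1)) := by
              apply le_trans _ (Nat.le_add_right _ _)
              rw [min_eq_right (le_of_lt hl)]; exact le_max_left _ _

section Shadow
variable {σ : Type*} [DecidableEq σ]

lemma my_degree_add (a b : σ →₀ ℕ) : (a + b).degree = a.degree + b.degree := by
  rw [Finsupp.degree_eq_weight_one]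
  exact map_add _ a b

lemma my_degree_single (j : σ) (c : ℕ) : (Finsupp.single j c).degree = c := by
  classical
  rcases eq_or_ne c 0 with rfl | hc
  · simp [Finsupp.degree]
  · exact Finsupp.degree_single j c

/-- The lower shadow of a set of monomials (exponent vectors). -/
noncomputable def mshadow (M : Finset (σ →₀ ℕ)) : Finset (σ →₀ ℕ) :=
  M.biUnion (fun u => u.support.image (fun i => u - Finsupp.single i 1))

lemma mem_mshadow {M : Finset (σ →₀ ℕ)} {w : σ →₀ ℕ} :
    w ∈ mshadow M ↔ ∃ u ∈ M, ∃ i ∈ u.support, u - Finsupp.single i 1 = w := by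
  simp [mshadow]

lemma sub_single_apply (u : σ →₀ ℕ) (j : σ) (c : ℕ) (a : σ) :
    (u - Finsupp.single j c) a = u a - if j = a then c else 0 := by
  rw [Finsupp.tsub_apply, Finsupp.single_apply]

lemma sub_single_add_cancel {u : σ →₀ ℕ} {j : σ} {c : ℕ} (h : c ≤ u j) :
    u - Finsupp.single j c + Finsupp.single j c = u := by
  ext a
  rw [Finsupp.add_apply, sub_single_apply, Finsupp.single_apply]
  rcases eq_or_ne j a with rfl | hja
  · rw [if_pos rfl]; omega
  · rw [if_neg hja]; omega

lemma degree_sub_single {u : σ →₀ ℕ} {j : σ} {c : ℕ} (h : c ≤ u j) :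
    (u - Finsupp.single j c).degree + c = u.degree := by
  conv_rhs => rw [← sub_single_add_cancel h]
  rw [my_degree_add, my_degree_single]

lemma sub_single_injOn {M : Finset (σ →₀ ℕ)} {j : σ} {c : ℕ} (h : ∀ u ∈ M, c ≤ u j) :
    Set.InjOn (fun u => u - Finsupp.single j c) M := by
  intro u hu v hv huv
  have h1 := sub_single_add_cancel (h u hu)
  have h2 := sub_single_add_cancel (h v hv)
  rw [← h1, ← h2]
  simp only at huv
  rw [huv]

lemma mshadow_card_min (s : ℕ) : ∀ (M : Finset (σ →₀ ℕ)) (m : ℕ), 1 ≤ m →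
    (M.biUnion Finsupp.support).card ≤ s → (∀ u ∈ M, u.degree = m) →
    min M.card m ≤ (mshadow M).card := by
  induction s with
  | zero =>
    intro M m hm hact hdeg
    rcases M.eq_empty_or_nonempty with rfl | ⟨u₀, hu₀⟩
    · simp
    · exfalso
      have hsub : u₀.support ⊆ M.biUnion Finsupp.support := fun i hi =>
        Finset.mem_biUnion.2 ⟨u₀, hu₀, hi⟩
      have he : (M.biUnion Finsupp.support) = ∅ := Finset.card_eq_zero.1 (Nat.le_zero.1 hact)
      have hsupp0 : u₀.support = ∅ := Finset.subset_empty.1 (he ▸ hsub)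
      have hz : u₀ = 0 := by
        ext a; by_contra ha
        exact (Finset.notMem_empty a) (hsupp0 ▸ Finsupp.mem_support_iff.2 ha)
      have hd := hdeg u₀ hu₀
      rw [hz, map_zero] at hd
      omega
  | succ s ih =>
    intro M m hm hact hdeg
    rcases M.eq_empty_or_nonempty with rfl | ⟨u₀, hu₀⟩
    · simp
    have hsupp : u₀.support.Nonempty := by
      rcases Finset.eq_empty_or_nonempty u₀.support with he | hne
      · exfalso
        have hz : u₀ = 0 := by
          ext a; by_contra ha
          exact (Finset.notMem_empty a) (he ▸ Finsupp.mem_support_iff.2 ha)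
        have hd := hdeg u₀ hu₀
        rw [hz, map_zero] at hd
        omega
      · exact hne
    obtain ⟨j, hj⟩ := hsupp
    have hjact : j ∈ M.biUnion Finsupp.support := Finset.mem_biUnion.2 ⟨u₀, hu₀, hj⟩
    have hujm : ∀ u ∈ M, u j ≤ m := fun u hu => (hdeg u hu) ▸ Finsupp.le_degree j u
    have hMcard : M.card = ∑ c ∈ Finset.Icc 0 m, (M.filter fun u => u j = c).card := by
      apply Finset.card_eq_sum_card_fiberwise (f := fun u : σ →₀ ℕ => u j)
      intro u hu
      simp only [Finset.mem_coe, Finset.mem_Icc]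
      exact ⟨Nat.zero_le _, hujm u hu⟩
    have hShCard : ∑ c ∈ Finset.Icc 0 m, ((mshadow M).filter fun w => w j = c).card
        = (mshadow M).card := by
      symm
      apply Finset.card_eq_sum_card_fiberwise (f := fun w : σ →₀ ℕ => w j)
      intro w hw
      obtain ⟨u, hu, i, hi, rfl⟩ := mem_mshadow.1 hw
      simp only [Finset.mem_coe, Finset.mem_Icc]
      refine ⟨Nat.zero_le _, le_trans ?_ (hujm u hu)⟩
      rw [sub_single_apply]
      omega
    -- per-level bounds
    have hlevel : ∀ c ∈ Finset.Icc 0 m,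
        max (min ((M.filter fun u => u j = c).card) (m - c)) ((M.filter fun u => u j = c + 1).card)
          ≤ ((mshadow M).filter fun w => w j = c).card := by
      intro c _
      apply max_le
      · -- via induction on the active set
        rcases le_or_gt m c with hmc | hcm
        · have h0 : m - c = 0 := Nat.sub_eq_zero_of_le hmc
          simp [h0]
        have hcle : ∀ u ∈ M.filter (fun u => u j = c), c ≤ u j := by
          intro u hu; rw [(Finset.mem_filter.1 hu).2]
        set N := (M.filter (fun u => u j = c)).image (fun u => u - Finsupp.single j c) with hN
        have hNcard : N.card = (M.filter fun u => u j = c).card :=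
          Finset.card_image_of_injOn (sub_single_injOn hcle)
        have hNdeg : ∀ v ∈ N, v.degree = m - c := by
          intro v hv
          obtain ⟨u, hu, rfl⟩ := Finset.mem_image.1 hv
          have h1 : (u - Finsupp.single j c).degree + c = u.degree :=
            degree_sub_single (hcle u hu)
          have h2 : u.degree = m := hdeg u (Finset.mem_filter.1 hu).1
          omega
        have hNj : ∀ v ∈ N, v j = 0 := by
          intro v hv
          obtain ⟨u, hu, rfl⟩ := Finset.mem_image.1 hv
          rw [sub_single_apply, if_pos rfl]
          have := (Finset.mem_filter.1 hu).2
          omega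
        have hNact : (N.biUnion Finsupp.support).card ≤ s := by
          have hsub : N.biUnion Finsupp.support ⊆ (M.biUnion Finsupp.support).erase j := by
            intro i hi
            obtain ⟨v, hv, hiv⟩ := Finset.mem_biUnion.1 hi
            have hij : i ≠ j := by
              intro h; subst h
              exact (Finsupp.mem_support_iff.1 hiv) (hNj v hv)
            refine Finset.mem_erase.2 ⟨hij, ?_⟩
            obtain ⟨u, hu, rfl⟩ := Finset.mem_image.1 hv
            apply Finset.mem_biUnion.2 ⟨u, (Finset.mem_filter.1 hu).1, ?_⟩
            have hune : u i ≠ 0 := by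
              have hmem := Finsupp.mem_support_iff.1 hiv
              rw [sub_single_apply, if_neg (Ne.symm hij)] at hmem
              omega
            exact Finsupp.mem_support_iff.2 hune
          calc (N.biUnion Finsupp.support).card
              ≤ ((M.biUnion Finsupp.support).erase j).card := Finset.card_le_card hsub
            _ = (M.biUnion Finsupp.support).card - 1 := Finset.card_erase_of_mem hjact
            _ ≤ s := by omega
        have hIH := ih N (m - c) (by omega) hNact hNdeg
        rw [hNcard] at hIH
        refine le_trans hIH ?_
        -- map shadow N into level-c part of shadow M
        apply Finset.card_le_card_of_injOn (fun w => w + Finsupp.single j c)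
        · intro w hw
          obtain ⟨v, hv, i, hi, rfl⟩ := mem_mshadow.1 hw
          obtain ⟨u, hu, rfl⟩ := Finset.mem_image.1 hv
          have huj : u j = c := (Finset.mem_filter.1 hu).2
          have hij : i ≠ j := by
            intro h; subst h
            have hmem := Finsupp.mem_support_iff.1 hi
            rw [sub_single_apply, if_pos rfl] at hmem
            omega
          have hiu' : u i ≠ 0 := by
            have hmem := Finsupp.mem_support_iff.1 hi
            rw [sub_single_apply, if_neg (Ne.symm hij)] at hmem
            omega
          have hiu : i ∈ u.support := Finsupp.mem_support_iff.2 hiu'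
          have key : (u - Finsupp.single j c - Finsupp.single i 1) + Finsupp.single j c
              = u - Finsupp.single i 1 := by
            ext a
            rw [Finsupp.add_apply, sub_single_apply, sub_single_apply, sub_single_apply,
              Finsupp.single_apply]
            rcases eq_or_ne j a with rfl | haj
            · rw [if_pos rfl, if_neg hij]
              omega
            · rw [if_neg haj]
              split_ifs <;> omega
          rw [Finset.mem_coe, Finset.mem_filter]
          constructor
          · beta_reduce
            rw [key]
            exact mem_mshadow.2 ⟨u, (Finset.mem_filter.1 hu).1, i, hiu, rfl⟩
          · beta_reduce
            rw [key, sub_single_apply, if_neg hij]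
            omega
        · intro a _ b _ hab
          exact add_right_cancel hab
      · -- shift bound : image of level (c+1) under subtracting e_j
        have h1le : ∀ u ∈ M.filter (fun u => u j = c + 1), 1 ≤ u j := by
          intro u hu; rw [(Finset.mem_filter.1 hu).2]; omega
        apply Finset.card_le_card_of_injOn (fun u => u - Finsupp.single j 1)
        · intro u hu
          have huj : u j = c + 1 := (Finset.mem_filter.1 hu).2
          have hjs : j ∈ u.support := Finsupp.mem_support_iff.2 (by omega)
          rw [Finset.mem_coe, Finset.mem_filter]
          refine ⟨mem_mshadow.2 ⟨u, (Finset.mem_filter.1 hu).1, j, hjs, rfl⟩, ?_⟩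
          rw [sub_single_apply, if_pos rfl]
          omega
        · exact sub_single_injOn h1le
    -- combine
    have hclub := club m m (fun c => (M.filter fun u => u j = c).card) 0 (by omega)
    rw [← hMcard] at hclub
    simp only [Nat.sub_zero] at hclub
    calc min M.card m
        ≤ ∑ c ∈ Finset.Icc 0 m,
            max (min ((M.filter fun u => u j = c).card) (m - c))
              ((M.filter fun u => u j = c + 1).card) := hclub
      _ ≤ ∑ c ∈ Finset.Icc 0 m, ((mshadow M).filter fun w => w j = c).card :=
          Finset.sum_le_sum hlevel
      _ = (mshadow M).card := hShCard

end Shadow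

section LMTheory

open MvPolynomial AddMonoidAlgebra

variable {k : Type*} [Field k] {r : ℕ} (m₀ : MonomialOrder (Fin r))

/-- The set of leading monomials of nonzero elements of a subspace of polynomials. -/
def lmSet (W : Submodule k (MvPolynomial (Fin r) k)) : Set (Fin r →₀ ℕ) :=
  {u | ∃ f ∈ W, f ≠ 0 ∧ AddMonoidAlgebra.supDegree m₀.toSyn f = m₀.toSyn u}

lemma degree_of_mem_support_homog {p : MvPolynomial (Fin r) k} {N : ℕ}
    (hp : p.IsHomogeneous N) {a : Fin r →₀ ℕ} (ha : a ∈ p.support) : a.degree = N := by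
  have h := hp (MvPolynomial.mem_support_iff.1 ha)
  rw [Finsupp.degree_eq_weight_one]
  exact h

lemma mem_support_of_supDegree {f : MvPolynomial (Fin r) k} (hf : f ≠ 0) {u : Fin r →₀ ℕ}
    (hd : AddMonoidAlgebra.supDegree m₀.toSyn f = m₀.toSyn u) : u ∈ f.support := by
  obtain ⟨a, ha, he⟩ := AddMonoidAlgebra.exists_supDegree_mem_support m₀.toSyn hf
  have hau : a = u := m₀.toSyn.injective (he ▸ hd)
  exact hau ▸ ha

lemma le_supDegree_of_mem_support {f : MvPolynomial (Fin r) k} {a : Fin r →₀ ℕ}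
    (ha : a ∈ f.support) : m₀.toSyn a ≤ AddMonoidAlgebra.supDegree m₀.toSyn f :=
  Finset.le_sup ha

lemma X_eq_single (i : Fin r) :
    (X i : MvPolynomial (Fin r) k) = AddMonoidAlgebra.single (Finsupp.single i 1) (1:k) := by
  rw [MvPolynomial.single_eq_monomial]; rfl

lemma monic_X (i : Fin r) : AddMonoidAlgebra.Monic m₀.toSyn (X i : MvPolynomial (Fin r) k) := by
  unfold AddMonoidAlgebra.Monic
  rw [X_eq_single]
  exact AddMonoidAlgebra.leadingCoeff_single m₀.toSyn.injective _ _

lemma supDegree_X (i : Fin r) :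
    AddMonoidAlgebra.supDegree m₀.toSyn (X i : MvPolynomial (Fin r) k)
      = m₀.toSyn (Finsupp.single i 1) := by
  rw [X_eq_single]
  exact AddMonoidAlgebra.supDegree_single_ne_zero _ one_ne_zero

end LMTheory

section Crux

open MvPolynomial AddMonoidAlgebra Module Submodule

variable {k : Type*} [Field k] {A : Type*} [CommRing A] [Algebra k A]

lemma crux {r : ℕ} (𝒜 : ℕ → Submodule k A) [GradedAlgebra 𝒜]
    (hfin : ∀ j, FiniteDimensional k (𝒜 j))
    (bv : Fin r → A) (hbv1 : ∀ i, bv i ∈ 𝒜 1)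
    (hsurj : ∀ a : A, ∃ p : MvPolynomial (Fin r) k, MvPolynomial.aeval bv p = a)
    (n : ℕ) (hn : 1 ≤ n) (hd : Module.finrank k (𝒜 n) ≤ n) :
    Module.finrank k (𝒜 (n + 1)) ≤ Module.finrank k (𝒜 n) := by
  classical
  set m₀ : MonomialOrder (Fin r) := MonomialOrder.lex with hm₀
  set φ : MvPolynomial (Fin r) k →ₐ[k] A := MvPolynomial.aeval (R := k) bv with hφ
  set φₗ : MvPolynomial (Fin r) k →ₗ[k] A := φ.toLinearMap with hφₗ
  set I : ℕ → Submodule k (MvPolynomial (Fin r) k) :=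
    fun N => (MvPolynomial.homogeneousSubmodule (Fin r) k N) ⊓ (LinearMap.ker φₗ) with hI
  -- monomials land in the right graded piece
  have hmono : ∀ u : Fin r →₀ ℕ, φ (MvPolynomial.monomial u (1:k)) ∈ 𝒜 u.degree := by
    intro u
    rw [MvPolynomial.aeval_monomial, map_one, one_mul]
    have h := SetLike.prod_pow_mem_graded 𝒜 (fun _ : Fin r => 1) bv (fun i => u i)
      (F := u.support) (fun i _ => hbv1 i)
    have he : ∑ i ∈ u.support, u i • 1 = u.degree := by
      simp [Finsupp.degree_apply, smul_eq_mul, mul_one]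
    rwa [he] at h
  have hmonsmul : ∀ (u : Fin r →₀ ℕ) (c : k),
      MvPolynomial.monomial u c = c • MvPolynomial.monomial u (1:k) := by
    intro u c
    rw [MvPolynomial.smul_monomial, smul_eq_mul, mul_one]
  have φhom : ∀ (N : ℕ) (p : MvPolynomial (Fin r) k), p.IsHomogeneous N → φ p ∈ 𝒜 N := by
    intro N p hp
    rw [p.as_sum, map_sum]
    apply Submodule.sum_mem
    intro a ha
    rw [hmonsmul a, map_smul]
    exact Submodule.smul_mem _ _ ((degree_of_mem_support_homog hp ha) ▸ hmono a)
  -- bridge : every element of 𝒜 N has a homogeneous preimage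
  have bridge : ∀ (N : ℕ) (a : A), a ∈ 𝒜 N →
      ∃ p : MvPolynomial (Fin r) k, p.IsHomogeneous N ∧ φ p = a := by
    intro N a ha
    obtain ⟨p, hp⟩ := hsurj a
    have hzero : (0 : MvPolynomial (Fin r) k).IsHomogeneous N :=
      (MvPolynomial.mem_homogeneousSubmodule _ _).1 (Submodule.zero_mem _)
    have hsum : ∑ i ∈ Finset.range (p.totalDegree + 1),
        MvPolynomial.homogeneousComponent i p = p := MvPolynomial.sum_homogeneousComponent p
    have haproj : a = GradedAlgebra.proj 𝒜 N a := by
      rw [GradedAlgebra.proj_apply, DirectSum.decompose_of_mem_same 𝒜 ha]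
    have hsplit : a = ∑ i ∈ Finset.range (p.totalDegree + 1),
        GradedAlgebra.proj 𝒜 N (φ (MvPolynomial.homogeneousComponent i p)) := by
      rw [haproj]
      conv_lhs => rw [← hp, ← hsum]
      rw [map_sum, map_sum]
    by_cases hN : N ∈ Finset.range (p.totalDegree + 1)
    · refine ⟨MvPolynomial.homogeneousComponent N p,
        MvPolynomial.homogeneousComponent_isHomogeneous N p, ?_⟩
      rw [hsplit, Finset.sum_eq_single_of_mem N hN]
      · rw [GradedAlgebra.proj_apply,
          DirectSum.decompose_of_mem_same 𝒜
            (φhom N _ (MvPolynomial.homogeneousComponent_isHomogeneous N p))]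
      · intro i _ hiN
        rw [GradedAlgebra.proj_apply,
          DirectSum.decompose_of_mem_ne 𝒜
            (φhom i _ (MvPolynomial.homogeneousComponent_isHomogeneous i p)) hiN]
    · refine ⟨0, hzero, ?_⟩
      rw [map_zero, hsplit]
      symm
      apply Finset.sum_eq_zero
      intro i hi
      rw [GradedAlgebra.proj_apply,
        DirectSum.decompose_of_mem_ne 𝒜
          (φhom i _ (MvPolynomial.homogeneousComponent_isHomogeneous i p))
          (by rintro rfl; exact hN hi)]
  -- standard monomials
  have hfinN : ∀ N : ℕ, {u : Fin r →₀ ℕ | u.degree = N ∧ u ∉ lmSet m₀ (I N)}.Finite :=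
    fun N => (Finsupp.finite_of_degree_le N).subset (fun u hu => le_of_eq hu.1)
  set 𝒩 : ℕ → Finset (Fin r →₀ ℕ) := fun N => (hfinN N).toFinset with h𝒩
  have mem𝒩 : ∀ (N : ℕ) (u : Fin r →₀ ℕ),
      u ∈ 𝒩 N ↔ (u.degree = N ∧ u ∉ lmSet m₀ (I N)) := fun N u => (hfinN N).mem_toFinset
  -- Fact 1 : card (𝒩 n) ≤ finrank (𝒜 n)
  have hF1 : (𝒩 n).card ≤ Module.finrank k (𝒜 n) := by
    haveI : Module.Finite k (𝒜 n) := hfin n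
    have li0 : LinearIndependent k
        (fun i : ↥(𝒩 n) => MvPolynomial.monomial (i : Fin r →₀ ℕ) (1:k)) := by
      have hb := (MvPolynomial.basisMonomials (Fin r) k).linearIndependent
      have := hb.comp (fun i : ↥(𝒩 n) => (i : Fin r →₀ ℕ)) Subtype.val_injective
      rw [MvPolynomial.coe_basisMonomials] at this
      exact this
    have hfam : LinearIndependent k (fun i : ↥(𝒩 n) =>
        (⟨φ (MvPolynomial.monomial (i : Fin r →₀ ℕ) (1:k)),
          φhom n _ (MvPolynomial.isHomogeneous_monomial _ ((mem𝒩 n i).1 i.2).1)⟩ : ↥(𝒜 n))) := by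
      rw [Fintype.linearIndependent_iff]
      intro g hg
      set q : MvPolynomial (Fin r) k :=
        ∑ i : ↥(𝒩 n), g i • MvPolynomial.monomial (i : Fin r →₀ ℕ) (1:k) with hq
      have hqker : φₗ q = 0 := by
        have := congrArg (Submodule.subtype (𝒜 n)) hg
        simpa [hq, map_sum, map_smul, hφₗ, AlgHom.toLinearMap_apply] using this
      have hqhom : q ∈ MvPolynomial.homogeneousSubmodule (Fin r) k n := by
        apply Submodule.sum_mem
        intro i _
        exact Submodule.smul_mem _ _ ((MvPolynomial.mem_homogeneousSubmodule _ _).2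
          (MvPolynomial.isHomogeneous_monomial _ ((mem𝒩 n i).1 i.2).1))
      have hqsupp : ∀ a ∈ q.support, a ∈ 𝒩 n := by
        intro a ha
        have h1 := MvPolynomial.support_sum ha
        obtain ⟨i, _, hai⟩ := Finset.mem_biUnion.1 h1
        have h2 : (g i • MvPolynomial.monomial (i : Fin r →₀ ℕ) (1:k)).support
            ⊆ {(i : Fin r →₀ ℕ)} := by
          refine subset_trans (Finsupp.support_smul) ?_
          exact MvPolynomial.support_monomial_subset
        have := h2 hai
        rw [Finset.mem_singleton] at this
        exact this ▸ i.2
      have hq0 : q = 0 := by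
        by_contra h0
        obtain ⟨a, ha, he⟩ := AddMonoidAlgebra.exists_supDegree_mem_support m₀.toSyn h0
        exact ((mem𝒩 n a).1 (hqsupp a ha)).2
          ⟨q, Submodule.mem_inf.2 ⟨hqhom, LinearMap.mem_ker.2 hqker⟩, h0, he⟩
      exact Fintype.linearIndependent_iff.1 li0 g (hq0 ▸ hq.symm)
    have hcard := hfam.fintype_card_le_finrank
    rwa [Fintype.card_coe] at hcard
  -- Fact 2 : finrank (𝒜 (n+1)) ≤ card (𝒩 (n+1))
  have hF2 : Module.finrank k (𝒜 (n+1)) ≤ (𝒩 (n+1)).card := by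
    set V : Submodule k (MvPolynomial (Fin r) k) :=
      Submodule.span k ((fun u => MvPolynomial.monomial u (1:k)) '' ↑(𝒩 (n+1))) ⊔ I (n+1)
      with hV
    have key : ∀ u : Fin r →₀ ℕ, u.degree = n+1 → MvPolynomial.monomial u (1:k) ∈ V := by
      have main : ∀ b : m₀.syn, ∀ u : Fin r →₀ ℕ, m₀.toSyn u = b → u.degree = n+1 →
          MvPolynomial.monomial u (1:k) ∈ V := by
        intro b
        induction b using WellFoundedLT.induction with
        | _ b IH =>
          intro u hub hdeg
          by_cases hu𝒩 : u ∈ 𝒩 (n+1)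
          · exact Submodule.mem_sup_left (Submodule.subset_span ⟨u, hu𝒩, rfl⟩)
          · have hulm : u ∈ lmSet m₀ (I (n+1)) := by
              by_contra hnot
              exact hu𝒩 ((mem𝒩 _ u).2 ⟨hdeg, hnot⟩)
            obtain ⟨f, hfI, hf0, hfd⟩ := hulm
            have hfhom : f.IsHomogeneous (n+1) := (Submodule.mem_inf.1 hfI).1
            have husup : u ∈ f.support := mem_support_of_supDegree m₀ hf0 hfd
            set c : k := MvPolynomial.coeff u f with hc
            have hc0 : c ≠ 0 := MvPolynomial.mem_support_iff.1 husup
            set q : MvPolynomial (Fin r) k :=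
              MvPolynomial.monomial u (1:k) - c⁻¹ • f with hqdef
            have hqu : MvPolynomial.coeff u q = 0 := by
              rw [hqdef, MvPolynomial.coeff_sub, MvPolynomial.coeff_smul,
                MvPolynomial.coeff_monomial, if_pos rfl, ← hc, smul_eq_mul,
                inv_mul_cancel₀ hc0, sub_self]
            have hqsupp : ∀ a ∈ q.support, m₀.toSyn a < b ∧ a.degree = n+1 := by
              intro a ha
              have hau : a ≠ u := by
                rintro rfl
                exact MvPolynomial.mem_support_iff.1 ha hqu
              have haf : a ∈ f.support := by
                have h1 := MvPolynomial.mem_support_iff.1 ha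
                rw [hqdef, MvPolynomial.coeff_sub, MvPolynomial.coeff_smul,
                  MvPolynomial.coeff_monomial, if_neg (fun h => hau h.symm), smul_eq_mul] at h1
                rw [MvPolynomial.mem_support_iff]
                intro h2
                apply h1
                simp [h2]
              constructor
              · rw [← hub]
                have hle := le_supDegree_of_mem_support m₀ haf
                rw [hfd] at hle
                exact lt_of_le_of_ne hle (fun h => hau (m₀.toSyn.injective h))
              · exact degree_of_mem_support_homog hfhom haf
            have hqV : q ∈ V := by
              rw [q.as_sum]
              apply Submodule.sum_mem
              intro a ha
              rw [hmonsmul a]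
              exact Submodule.smul_mem _ _
                (IH (m₀.toSyn a) (hqsupp a ha).1 a rfl (hqsupp a ha).2)
            have hufq : MvPolynomial.monomial u (1:k) = q + c⁻¹ • f := by
              rw [hqdef, sub_add_cancel]
            rw [hufq]
            exact Submodule.add_mem _ hqV
              (Submodule.smul_mem _ _ (Submodule.mem_sup_right hfI))
      exact fun u hdeg => main (m₀.toSyn u) u rfl hdeg
    have hAV : 𝒜 (n+1) ≤ Submodule.map φₗ V := by
      intro a ha
      obtain ⟨p, hp, hpa⟩ := bridge (n+1) a ha
      refine ⟨p, ?_, hpa⟩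
      rw [p.as_sum]
      apply Submodule.sum_mem
      intro a' ha'
      rw [hmonsmul a']
      exact Submodule.smul_mem _ _ (key a' (degree_of_mem_support_homog hp ha'))
    set T : Finset A := (𝒩 (n+1)).image (fun u => φ (MvPolynomial.monomial u (1:k))) with hT
    have hmap : Submodule.map φₗ V ≤ Submodule.span k (T : Set A) := by
      rw [hV, Submodule.map_sup]
      apply sup_le
      · rw [Submodule.map_span]
        apply Submodule.span_mono
        rintro x ⟨y, ⟨u, hu, rfl⟩, rfl⟩
        exact Finset.mem_coe.2 (Finset.mem_image.2 ⟨u, hu, rfl⟩)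
      · rintro x ⟨p, hpI, rfl⟩
        have h0 : φₗ p = 0 := LinearMap.mem_ker.1 (Submodule.mem_inf.1 hpI).2
        rw [h0]
        exact Submodule.zero_mem _
    haveI : FiniteDimensional k (Submodule.span k (T : Set A)) :=
      FiniteDimensional.span_finset k T
    calc Module.finrank k (𝒜 (n+1))
        ≤ Module.finrank k (Submodule.span k (T : Set A)) :=
          Submodule.finrank_mono (le_trans hAV hmap)
      _ ≤ T.card := finrank_span_finset_le_card T
      _ ≤ (𝒩 (n+1)).card := Finset.card_image_le
  -- Fact 3 : shadow closure
  have hsh : mshadow (𝒩 (n+1)) ⊆ 𝒩 n := by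
    intro w hw
    obtain ⟨u, hu, i, hi, rfl⟩ := mem_mshadow.1 hw
    obtain ⟨hudeg, hulm⟩ := (mem𝒩 _ u).1 hu
    have hui : 1 ≤ u i := Nat.one_le_iff_ne_zero.2 (Finsupp.mem_support_iff.1 hi)
    have hwdeg : (u - Finsupp.single i 1).degree = n := by
      have := degree_sub_single (u := u) (j := i) (c := 1) hui
      omega
    rw [mem𝒩]
    refine ⟨hwdeg, ?_⟩
    rintro ⟨f, hfI, hf0, hfd⟩
    apply hulm
    have hfhom : f.IsHomogeneous n := (Submodule.mem_inf.1 hfI).1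
    have hfker : φₗ f = 0 := LinearMap.mem_ker.1 (Submodule.mem_inf.1 hfI).2
    refine ⟨f * X i, ?_, ?_, ?_⟩
    · refine Submodule.mem_inf.2 ⟨?_, ?_⟩
      · exact (MvPolynomial.mem_homogeneousSubmodule _ _).2
          (hfhom.mul (MvPolynomial.isHomogeneous_X k i))
      · rw [LinearMap.mem_ker]
        show φ (f * X i) = 0
        rw [map_mul]
        have : φ f = 0 := hfker
        rw [this, zero_mul]
    · intro h0
      have : MvPolynomial.coeff ((u - Finsupp.single i 1) + Finsupp.single i 1) (f * X i)
          = MvPolynomial.coeff (u - Finsupp.single i 1) f := MvPolynomial.coeff_mul_X _ _ _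
      rw [h0, MvPolynomial.coeff_zero] at this
      exact MvPolynomial.mem_support_iff.1 (mem_support_of_supDegree m₀ hf0 hfd) this.symm
    · rw [(monic_X m₀ i).supDegree_mul_of_ne_zero_left m₀.toSyn.injective
        (fun a b => map_add _ a b) hf0, hfd, supDegree_X, ← map_add,
        sub_single_add_cancel hui]
  -- combine everything
  have hdegN : ∀ u ∈ 𝒩 (n+1), u.degree = n+1 := fun u hu => ((mem𝒩 _ u).1 hu).1
  have hmin := mshadow_card_min (((𝒩 (n+1)).biUnion Finsupp.support).card) (𝒩 (n+1))
    (n+1) (by omega) le_rfl hdegN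
  have hcard : (mshadow (𝒩 (n+1))).card ≤ (𝒩 n).card := Finset.card_le_card hsh
  omega

end Crux

/-- (Consequence of Macaulay's growth theorem.)  Let `A` be a standard graded `k`-algebra
(`A_0 = k`, generated in degree one) with Hilbert function `H(i) = dim_k A_i`.  If
`H(i) ≤ i` for some `i ≥ 1`, then `H` is nonincreasing from degree `i` onward:
`H(i) ≥ H(i+1) ≥ H(i+2) ≥ ⋯`. -/
theorem hilbert_function_nonincreasing (k A : Type*) [Field k] [CommRing A] [Algebra k A]
    (𝒜 : ℕ → Submodule k A) [GradedAlgebra 𝒜]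
    (hfin : ∀ j, FiniteDimensional k (𝒜 j))
    (hstd0 : Module.finrank k (𝒜 0) = 1)
    (hstd1 : Algebra.adjoin k (𝒜 1 : Set A) = ⊤)
    (i : ℕ) (hi : 1 ≤ i) (hH : Module.finrank k (𝒜 i) ≤ i) :
    ∀ j, i ≤ j → Module.finrank k (𝒜 (j + 1)) ≤ Module.finrank k (𝒜 j) := by
  classical
  haveI := hfin 1
  set r := Module.finrank k (𝒜 1) with hr
  set b := Module.finBasis k ↥(𝒜 1) with hb
  set bv : Fin r → A := fun t => (b t : A) with hbv
  have hbv1 : ∀ t, bv t ∈ 𝒜 1 := fun t => (b t).2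
  have hspan : Submodule.span k (Set.range bv) = 𝒜 1 := by
    have h1 : Set.range bv = (Submodule.subtype (𝒜 1)) '' (Set.range b) := by
      ext x
      simp only [hbv, Set.mem_range, Set.mem_image, Submodule.coe_subtype]
      constructor
      · rintro ⟨t, rfl⟩; exact ⟨b t, ⟨t, rfl⟩, rfl⟩
      · rintro ⟨y, ⟨t, rfl⟩, rfl⟩; exact ⟨t, rfl⟩
    rw [h1, ← Submodule.map_span, Module.Basis.span_eq, Submodule.map_top, Submodule.range_subtype]
  have hadj : Algebra.adjoin k (Set.range bv) = ⊤ := by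
    calc Algebra.adjoin k (Set.range bv)
        = Algebra.adjoin k ((Submodule.span k (Set.range bv) : Submodule k A) : Set A) :=
          (Algebra.adjoin_span k).symm
      _ = ⊤ := by rw [hspan, hstd1]
  have hsurj : ∀ a : A, ∃ p : MvPolynomial (Fin r) k, MvPolynomial.aeval bv p = a := by
    intro a
    have ha : a ∈ (MvPolynomial.aeval (R := k) bv).range := by
      rw [← Algebra.adjoin_range_eq_range_aeval, hadj]
      trivial
    exact ha
  have haux : ∀ j, i ≤ j → Module.finrank k (𝒜 j) ≤ j := by
    intro j hj
    induction j, hj using Nat.le_induction with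
    | base => exact hH
    | succ j hij IH =>
      have := crux 𝒜 hfin bv hbv1 hsurj j (le_trans hi hij) IH
      omega
  intro j hj
  exact crux 𝒜 hfin bv hbv1 hsurj j (le_trans hi hj) (haux j hj)
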